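/- arXiv:1904.10617 — 4 statements merged into one kernel-verified Lean document; each statement's English description precedes it below -/
import Mathlib

section
/- Let D > 0, let 0 < c < 1, and let α with 0 < α < 1. Suppose f : [0,1] → ℝ satisfies: for all x, x̄ with 0 < |x − x̄| < 1, there exists a natural number m ≥ 2 with |x − x̄| ≤ c^(m−2) and |f(x) − f(x̄)| ≤ D·(m−1)·|x − x̄|. Then f is Hölder continuous with exponent 1 − α and constant D·(1 + 1/(α·e·|ln c|)); that is, |f(x) − f(x̄)| ≤ D·(1 + 1/(α·e·|ln c|))·|x − x̄|^(1−α) for all such x, x̄. -/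
lemma log_le_div_e (x : ℝ) (hx : 0 < x) : Real.log x ≤ x / Real.exp 1 := by
  have h := Real.log_le_sub_one_of_pos (x := x / Real.exp 1) (by positivity)
  rw [Real.log_div hx.ne' (Real.exp_ne_zero 1), Real.log_exp] at h
  linarith

lemma mul_neg_log_le (s : ℝ) (h0 : 0 < s) (h1 : s < 1) :
    s * (-Real.log s) ≤ 1 / Real.exp 1 := by
  have h := log_le_div_e (1 / s) (by positivity)
  rw [Real.log_div one_ne_zero h0.ne', Real.log_one] at h
  have hE := Real.exp_pos 1
  have : s * ((1 / s) / Real.exp 1) = 1 / Real.exp 1 := by field_simp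
  nlinarith

theorem stmt_3 (D c α : ℝ) (hD : 0 < D) (hc0 : 0 < c) (hc1 : c < 1)
    (hα0 : 0 < α) (hα1 : α < 1) (f : ℝ → ℝ)
    (hf : ∀ x ∈ Set.Icc (0:ℝ) 1, ∀ x' ∈ Set.Icc (0:ℝ) 1,
      0 < |x - x'| → |x - x'| < 1 →
      ∃ m : ℕ, 2 ≤ m ∧ |x - x'| ≤ c ^ (m - 2) ∧
        |f x - f x'| ≤ D * ((m : ℝ) - 1) * |x - x'|) :
    ∀ x ∈ Set.Icc (0:ℝ) 1, ∀ x' ∈ Set.Icc (0:ℝ) 1,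
      0 < |x - x'| → |x - x'| < 1 →
      |f x - f x'| ≤ D * (1 + 1 / (α * Real.exp 1 * |Real.log c|)) * |x - x'| ^ (1 - α) := by
  intro x hx x' hx' ht0 ht1
  set t := |x - x'| with htdef
  obtain ⟨m, hm2, htc, hfb⟩ := hf x hx x' hx' ht0 ht1
  set E := Real.exp 1 with hEdef
  have hE : 0 < E := Real.exp_pos 1
  have hlogc : Real.log c < 0 := Real.log_neg hc0 hc1
  have hlogt : Real.log t < 0 := Real.log_neg ht0 ht1
  set A := -Real.log t with hAdef
  set B := -Real.log c with hBdef
  have hA : 0 < A := by simp [hAdef]; linarith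
  have hB : 0 < B := by simp [hBdef]; linarith
  have habs : |Real.log c| = B := abs_of_neg hlogc
  set P := t ^ (1 - α) with hPdef
  have hP : 0 < P := Real.rpow_pos_of_pos ht0 _
  -- f1 : (m-2) * B ≤ A
  have f1 : ((m : ℝ) - 2) * B ≤ A := by
    have h1 : Real.log t ≤ Real.log (c ^ (m - 2)) := Real.log_le_log ht0 htc
    rw [Real.log_pow] at h1
    have hcast : ((m - 2 : ℕ) : ℝ) = (m : ℝ) - 2 := by
      push_cast [Nat.cast_sub hm2]; ring
    rw [hcast] at h1
    nlinarith
  -- f2 : t ≤ P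
  have f2 : t ≤ P := by
    have := Real.rpow_le_rpow_of_exponent_ge ht0 ht1.le (by linarith : 1 - α ≤ 1)
    rwa [Real.rpow_one] at this
  -- f3 : t * A * (α * E) ≤ P
  have f3 : t * A * (α * E) ≤ P := by
    have hs0 : 0 < t ^ α := Real.rpow_pos_of_pos ht0 _
    have hs1 : t ^ α < 1 := Real.rpow_lt_one ht0.le ht1 hα0
    have h := mul_neg_log_le (t ^ α) hs0 hs1
    rw [Real.log_rpow ht0] at h
    -- h : t^α * -(α * log t) ≤ 1/E
    have hkey : t ^ α * A * (α * E) ≤ 1 := by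
      have : t ^ α * -(α * Real.log t) = t ^ α * A * α := by rw [hAdef]; ring
      rw [this] at h
      calc t ^ α * A * (α * E) = (t ^ α * A * α) * E := by ring
        _ ≤ (1 / E) * E := by
            apply mul_le_mul_of_nonneg_right h hE.le
        _ = 1 := by field_simp
    have hPt : P * t ^ α = t := by
      rw [hPdef, ← Real.rpow_add ht0]; norm_num
    have h2 : P * (t ^ α * A * (α * E)) ≤ P * 1 := mul_le_mul_of_nonneg_left hkey hP.le
    nlinarith [hPt]
  have hm1 : (1 : ℝ) ≤ (m : ℝ) - 1 := by
    have : (2 : ℝ) ≤ (m : ℝ) := by exact_mod_cast hm2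
    linarith
  -- main chain, denominators cleared
  have goal' : D * ((m : ℝ) - 1) * t * (α * E * B) ≤ D * (α * E * B + 1) * P := by
    nlinarith [mul_le_mul_of_nonneg_left f1 (by positivity : (0:ℝ) ≤ D * t * (α * E)),
      mul_le_mul_of_nonneg_left f2 (by positivity : (0:ℝ) ≤ D * (α * E * B)),
      mul_le_mul_of_nonneg_left f3 (by positivity : (0:ℝ) ≤ D)]
  have hrhs : D * (1 + 1 / (α * E * B)) * P = D * (α * E * B + 1) * P / (α * E * B) := by
    field_simp
  rw [habs, hrhs, le_div_iff₀ (by positivity)]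
  calc |f x - f x'| * (α * E * B) ≤ (D * ((m : ℝ) - 1) * t) * (α * E * B) := by
        apply mul_le_mul_of_nonneg_right hfb (by positivity)
    _ ≤ D * (α * E * B + 1) * P := goal'
end

section
/- Let n ≥ 2, let L_i : [0,1] → [x_{i−1}, x_i] for i = 1, …, n be contraction homeomorphisms with Lipschitz constants c_{L_i} < 1, and let F_i : [0,1] × ℝ² → ℝ² be given by F_i(x, ȳ) = S_i(x)·ȳ + Q_i(x), where S_i : [0,1] → ℝ^{2×2} and Q_i : [0,1] → ℝ² are Lipschitz with constants L_S and L_Q (in the ‖·‖₁ operator norm and ‖·‖₁ norm), and sup_x ‖S_i(x)‖₁ ≤ S < 1. Restrict to a bounded set D ⊂ ℝ² with κ = sup_{ȳ∈D} ‖ȳ‖₁ < ∞. Then for any θ with 0 < θ < (1 − c_L)/(L_S·κ + L_Q), where c_L = max_i c_{L_i}, each map W_i(x, ȳ) = (L_i(x), F_i(x, ȳ)) is a contraction on [0,1] × D with respect to the metric ρ_θ((x, ȳ), (x′, ȳ′)) = |x − x′| + θ·‖ȳ − ȳ′‖₁, with contraction ratio max{c_L + θ(L_S κ + L_Q), S}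 < 1. -/
/-- The ℓ¹ norm on ℝ². -/
noncomputable def norm1 (y : ℝ × ℝ) : ℝ := |y.1| + |y.2|

lemma norm1_nonneg (y : ℝ × ℝ) : 0 ≤ norm1 y := by
  unfold norm1; positivity

lemma norm1_add_le (y z : ℝ × ℝ) : norm1 (y + z) ≤ norm1 y + norm1 z := by
  unfold norm1
  have h1 := abs_add_le y.1 z.1
  have h2 := abs_add_le y.2 z.2
  simp only [Prod.fst_add, Prod.snd_add]
  linarith

theorem stmt_5 (n : ℕ) (hn : 2 ≤ n)
    (L : Fin n → ℝ → ℝ) (cL : ℝ) (hcL0 : 0 ≤ cL) (hcL1 : cL < 1)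
    (hLlip : ∀ i, ∀ x ∈ Set.Icc (0:ℝ) 1, ∀ x' ∈ Set.Icc (0:ℝ) 1,
      |L i x - L i x'| ≤ cL * |x - x'|)
    (S : Fin n → ℝ → (ℝ × ℝ) →ₗ[ℝ] (ℝ × ℝ)) (Q : Fin n → ℝ → ℝ × ℝ)
    (LS LQ Sb κ : ℝ)
    (hSb : ∀ i x y, norm1 (S i x y) ≤ Sb * norm1 y) (hSb1 : Sb < 1)
    (hSlip : ∀ i x x' y, norm1 (S i x y - S i x' y) ≤ LS * |x - x'| * norm1 y)
    (hQlip : ∀ i x x', norm1 (Q i x - Q i x') ≤ LQ * |x - x'|)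
    (D : Set (ℝ × ℝ)) (hκ : ∀ y ∈ D, norm1 y ≤ κ)
    (θ : ℝ) (hθ0 : 0 < θ) (hθ : θ < (1 - cL) / (LS * κ + LQ)) :
    max (cL + θ * (LS * κ + LQ)) Sb < 1 ∧
    ∀ i, ∀ x ∈ Set.Icc (0:ℝ) 1, ∀ x' ∈ Set.Icc (0:ℝ) 1, ∀ y ∈ D, ∀ y' ∈ D,
      |L i x - L i x'| + θ * norm1 ((S i x y + Q i x) - (S i x' y' + Q i x')) ≤
        max (cL + θ * (LS * κ + LQ)) Sb * (|x - x'| + θ * norm1 (y - y')) := by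
  -- LS*κ + LQ > 0
  have hA : 0 < LS * κ + LQ := by
    by_contra h
    push_neg at h
    have : (1 - cL) / (LS * κ + LQ) ≤ 0 :=
      div_nonpos_of_nonneg_of_nonpos (by linarith) h
    linarith
  have hθA : θ * (LS * κ + LQ) < 1 - cL := (lt_div_iff₀ hA).mp hθ
  have hmax : max (cL + θ * (LS * κ + LQ)) Sb < 1 := max_lt (by linarith) hSb1
  refine ⟨hmax, ?_⟩
  -- LS, LQ, Sb nonneg
  have i0 : Fin n := ⟨0, by omega⟩
  have hLS : 0 ≤ LS := by
    have h := hSlip i0 0 1 (1, 0)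
    simp [norm1] at h
    linarith [abs_nonneg ((S i0 0 (1,0)).1 - (S i0 1 (1,0)).1),
      abs_nonneg ((S i0 0 (1,0)).2 - (S i0 1 (1,0)).2)]
  have hLQ : 0 ≤ LQ := by
    have h := hQlip i0 0 1
    have h0 := norm1_nonneg (Q i0 0 - Q i0 1)
    simp at h
    linarith
  have hSb0 : 0 ≤ Sb := by
    have h := hSb i0 0 (1, 0)
    simp [norm1] at h
    linarith [abs_nonneg ((S i0 0 (1,0)).1), abs_nonneg ((S i0 0 (1,0)).2)]
  intro i x hx x' hx' y hy y' hy'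
  set M := max (cL + θ * (LS * κ + LQ)) Sb with hM
  have hid : (S i x y + Q i x) - (S i x' y' + Q i x')
      = (S i x y - S i x' y) + (S i x' (y - y')) + (Q i x - Q i x') := by
    rw [map_sub]; abel
  have htri : norm1 ((S i x y + Q i x) - (S i x' y' + Q i x'))
      ≤ norm1 (S i x y - S i x' y) + norm1 (S i x' (y - y')) + norm1 (Q i x - Q i x') := by
    rw [hid]
    calc norm1 _ ≤ norm1 ((S i x y - S i x' y) + (S i x' (y - y'))) + norm1 (Q i x - Q i x') :=
          norm1_add_le _ _
      _ ≤ _ := by linarith [norm1_add_le (S i x y - S i x' y) (S i x' (y - y'))]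
  have h1 : norm1 (S i x y - S i x' y) ≤ LS * κ * |x - x'| := by
    calc norm1 (S i x y - S i x' y) ≤ LS * |x - x'| * norm1 y := hSlip i x x' y
      _ ≤ LS * |x - x'| * κ := by
          apply mul_le_mul_of_nonneg_left (hκ y hy) (by positivity)
      _ = LS * κ * |x - x'| := by ring
  have h2 : norm1 (S i x' (y - y')) ≤ Sb * norm1 (y - y') := hSb i x' _
  have h3 : norm1 (Q i x - Q i x') ≤ LQ * |x - x'| := hQlip i x x'
  have hL := hLlip i x hx x' hx'
  have hxn : 0 ≤ |x - x'| := abs_nonneg _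
  have hyn : 0 ≤ norm1 (y - y') := norm1_nonneg _
  have hM1 : cL + θ * (LS * κ + LQ) ≤ M := le_max_left _ _
  have hM2 : Sb ≤ M := le_max_right _ _
  have key : |L i x - L i x'| + θ * norm1 ((S i x y + Q i x) - (S i x' y' + Q i x'))
      ≤ (cL + θ * (LS * κ + LQ)) * |x - x'| + Sb * (θ * norm1 (y - y')) := by
    nlinarith [mul_le_mul_of_nonneg_left htri hθ0.le]
  calc _ ≤ (cL + θ * (LS * κ + LQ)) * |x - x'| + Sb * (θ * norm1 (y - y')) := key
    _ ≤ M * |x - x'| + M * (θ * norm1 (y - y')) := by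
        gcongr <;> positivity
    _ = M * (|x - x'| + θ * norm1 (y - y')) := by ring
end

section
/- Let f₁, f₂ : [0,1] → ℝ satisfy the functional equations f₁(x) = sᵢ(x)·f₁(Lᵢ^{-1}(x)) + sᵢ′(x)·f₂(Lᵢ^{-1}(x)) + qᵢ(Lᵢ^{-1}(x)) for x ∈ Iᵢ = [ (i−1)/n, i/n ], where Lᵢ(x) = (x + i − 1)/n, and sᵢ, sᵢ′, qᵢ are Lipschitz with constants L_{sᵢ}, L_{sᵢ′}, L_{qᵢ} and sup norms bounded by ω̄ᵢ = max{‖sᵢ‖_∞, ‖sᵢ′‖_∞}. Then the oscillation of f₁ on Iᵢ satisfies R_{f₁}[Iᵢ] ≤ ω̄ᵢ·(R_{f₁}[0,1] + R_{f₂}[0,1]) + (L_{sᵢ}·‖f₁‖_∞ + L_{sᵢ′}·‖f₂‖_∞ + n·L_{qᵢ})/n, where R_g[D] = sup{|g(x₂) − g(x₁)| : x₁, x₂ ∈ D}. -/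
/-- The oscillation `R_g[D]` of `g` over `D`. -/
noncomputable def oscOn (g : ℝ → ℝ) (D : Set ℝ) : ℝ :=
  sSup {r : ℝ | ∃ x₁ ∈ D, ∃ x₂ ∈ D, r = |g x₂ - g x₁|}

theorem stmt_14 (n : ℕ) (hn : 1 ≤ n) (i : ℕ) (hi1 : 1 ≤ i) (hin : i ≤ n)
    (f₁ f₂ s s' q : ℝ → ℝ)
    (Ls Ls' Lq B₁ B₂ ω : ℝ)
    (hs : ∀ x y : ℝ, |s x - s y| ≤ Ls * |x - y|)
    (hs' : ∀ x y : ℝ, |s' x - s' y| ≤ Ls' * |x - y|)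
    (hq : ∀ x y : ℝ, |q x - q y| ≤ Lq * |x - y|)
    (hω : ∀ x ∈ Set.Icc (((i:ℝ) - 1) / n) ((i:ℝ) / n), |s x| ≤ ω ∧ |s' x| ≤ ω)
    (hB₁ : ∀ x ∈ Set.Icc (0:ℝ) 1, |f₁ x| ≤ B₁)
    (hB₂ : ∀ x ∈ Set.Icc (0:ℝ) 1, |f₂ x| ≤ B₂)
    (hfe : ∀ x ∈ Set.Icc (((i:ℝ) - 1) / n) ((i:ℝ) / n),
      f₁ x = s x * f₁ (n * x - ((i:ℝ) - 1)) + s' x * f₂ (n * x - ((i:ℝ) - 1)) +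
        q (n * x - ((i:ℝ) - 1))) :
    oscOn f₁ (Set.Icc (((i:ℝ) - 1) / n) ((i:ℝ) / n)) ≤
      ω * (oscOn f₁ (Set.Icc 0 1) + oscOn f₂ (Set.Icc 0 1)) +
        (Ls * B₁ + Ls' * B₂ + n * Lq) / n := by
  have hn0 : (0:ℝ) < n := by exact_mod_cast hn
  set a : ℝ := ((i:ℝ) - 1) / n with ha
  set b : ℝ := (i:ℝ) / n with hb
  have hab : a ≤ b := by
    apply div_le_div_of_nonneg_right (by linarith) hn0.le
  have haI : a ∈ Set.Icc a b := ⟨le_refl _, hab⟩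
  have hω0 : 0 ≤ ω := (abs_nonneg _).trans (hω a haI).1
  have hLs0 : 0 ≤ Ls := by
    have := hs 0 1
    simp at this; linarith [abs_nonneg (s 0 - s 1)]
  have hLs'0 : 0 ≤ Ls' := by
    have := hs' 0 1
    simp at this; linarith [abs_nonneg (s' 0 - s' 1)]
  have hLq0 : 0 ≤ Lq := by
    have := hq 0 1
    simp at this; linarith [abs_nonneg (q 0 - q 1)]
  have hB₁0 : 0 ≤ B₁ := (abs_nonneg _).trans (hB₁ 0 (by norm_num))
  have hB₂0 : 0 ≤ B₂ := (abs_nonneg _).trans (hB₂ 0 (by norm_num))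
  -- map into [0,1]
  have hmap : ∀ x ∈ Set.Icc a b, (n * x - ((i:ℝ) - 1)) ∈ Set.Icc (0:ℝ) 1 := by
    intro x hx
    obtain ⟨h1, h2⟩ := hx
    rw [ha, div_le_iff₀ hn0] at h1
    rw [hb, le_div_iff₀ hn0] at h2
    constructor <;> nlinarith
  -- oscillation sets are bounded above and nonempty
  have bdd₁ : BddAbove {r : ℝ | ∃ x₁ ∈ Set.Icc (0:ℝ) 1, ∃ x₂ ∈ Set.Icc (0:ℝ) 1, r = |f₁ x₂ - f₁ x₁|} := by
    refine ⟨2 * B₁, ?_⟩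
    rintro r ⟨x₁, h₁, x₂, h₂, rfl⟩
    calc |f₁ x₂ - f₁ x₁| ≤ |f₁ x₂| + |f₁ x₁| := abs_sub _ _
      _ ≤ 2 * B₁ := by linarith [hB₁ x₁ h₁, hB₁ x₂ h₂]
  have bdd₂ : BddAbove {r : ℝ | ∃ x₁ ∈ Set.Icc (0:ℝ) 1, ∃ x₂ ∈ Set.Icc (0:ℝ) 1, r = |f₂ x₂ - f₂ x₁|} := by
    refine ⟨2 * B₂, ?_⟩
    rintro r ⟨x₁, h₁, x₂, h₂, rfl⟩
    calc |f₂ x₂ - f₂ x₁| ≤ |f₂ x₂| + |f₂ x₁| := abs_sub _ _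
      _ ≤ 2 * B₂ := by linarith [hB₂ x₁ h₁, hB₂ x₂ h₂]
  have hO₁ : ∀ u ∈ Set.Icc (0:ℝ) 1, ∀ v ∈ Set.Icc (0:ℝ) 1,
      |f₁ u - f₁ v| ≤ oscOn f₁ (Set.Icc 0 1) := fun u hu v hv =>
    le_csSup bdd₁ ⟨v, hv, u, hu, rfl⟩
  have hO₂ : ∀ u ∈ Set.Icc (0:ℝ) 1, ∀ v ∈ Set.Icc (0:ℝ) 1,
      |f₂ u - f₂ v| ≤ oscOn f₂ (Set.Icc 0 1) := fun u hu v hv =>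
    le_csSup bdd₂ ⟨v, hv, u, hu, rfl⟩
  have hO₁0 : 0 ≤ oscOn f₁ (Set.Icc (0:ℝ) 1) :=
    (abs_nonneg _).trans (hO₁ 0 (by norm_num) 0 (by norm_num))
  have hO₂0 : 0 ≤ oscOn f₂ (Set.Icc (0:ℝ) 1) :=
    (abs_nonneg _).trans (hO₂ 0 (by norm_num) 0 (by norm_num))
  -- the key pointwise bound
  have key : ∀ x ∈ Set.Icc a b, ∀ y ∈ Set.Icc a b,
      |f₁ x - f₁ y| ≤ ω * (oscOn f₁ (Set.Icc 0 1) + oscOn f₂ (Set.Icc 0 1)) +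
        (Ls * B₁ + Ls' * B₂ + n * Lq) / n := by
    intro x hx y hy
    set u : ℝ := n * x - ((i:ℝ) - 1) with hu
    set v : ℝ := n * y - ((i:ℝ) - 1) with hv
    have huI := hmap x hx
    have hvI := hmap y hy
    have hxy : |x - y| ≤ 1 / n := by
      obtain ⟨hx1, hx2⟩ := hx
      obtain ⟨hy1, hy2⟩ := hy
      rw [abs_sub_le_iff]
      have : b - a = 1 / n := by rw [ha, hb]; field_simp; ring
      constructor <;> linarith
    have huv : |u - v| ≤ 1 := by
      have : u - v = n * (x - y) := by rw [hu, hv]; ring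
      rw [this, abs_mul, abs_of_pos hn0]
      calc (n:ℝ) * |x - y| ≤ n * (1 / n) := by
            exact mul_le_mul_of_nonneg_left hxy hn0.le
        _ = 1 := by field_simp
    rw [hfe x hx, hfe y hy]
    have expand : (s x * f₁ u + s' x * f₂ u + q u) - (s y * f₁ v + s' y * f₂ v + q v)
        = s x * (f₁ u - f₁ v) + (s x - s y) * f₁ v
          + (s' x * (f₂ u - f₂ v) + (s' x - s' y) * f₂ v) + (q u - q v) := by ring
    rw [expand]
    have h1 : |s x * (f₁ u - f₁ v)| ≤ ω * oscOn f₁ (Set.Icc 0 1) := by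
      rw [abs_mul]
      exact mul_le_mul (hω x hx).1 (hO₁ u huI v hvI) (abs_nonneg _) hω0
    have h2 : |(s x - s y) * f₁ v| ≤ Ls * B₁ / n := by
      rw [abs_mul]
      have : |s x - s y| ≤ Ls / n := by
        calc |s x - s y| ≤ Ls * |x - y| := hs x y
          _ ≤ Ls * (1 / n) := mul_le_mul_of_nonneg_left hxy hLs0
          _ = Ls / n := by ring
      calc |s x - s y| * |f₁ v| ≤ (Ls / n) * B₁ :=
            mul_le_mul this (hB₁ v hvI) (abs_nonneg _) (by positivity)
        _ = Ls * B₁ / n := by ring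
    have h3 : |s' x * (f₂ u - f₂ v)| ≤ ω * oscOn f₂ (Set.Icc 0 1) := by
      rw [abs_mul]
      exact mul_le_mul (hω x hx).2 (hO₂ u huI v hvI) (abs_nonneg _) hω0
    have h4 : |(s' x - s' y) * f₂ v| ≤ Ls' * B₂ / n := by
      rw [abs_mul]
      have : |s' x - s' y| ≤ Ls' / n := by
        calc |s' x - s' y| ≤ Ls' * |x - y| := hs' x y
          _ ≤ Ls' * (1 / n) := mul_le_mul_of_nonneg_left hxy hLs'0
          _ = Ls' / n := by ring
      calc |s' x - s' y| * |f₂ v| ≤ (Ls' / n) * B₂ :=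
            mul_le_mul this (hB₂ v hvI) (abs_nonneg _) (by positivity)
        _ = Ls' * B₂ / n := by ring
    have h5 : |q u - q v| ≤ Lq := by
      calc |q u - q v| ≤ Lq * |u - v| := hq u v
        _ ≤ Lq * 1 := mul_le_mul_of_nonneg_left huv hLq0
        _ = Lq := mul_one _
    have tri : |s x * (f₁ u - f₁ v) + (s x - s y) * f₁ v
          + (s' x * (f₂ u - f₂ v) + (s' x - s' y) * f₂ v) + (q u - q v)|
        ≤ |s x * (f₁ u - f₁ v)| + |(s x - s y) * f₁ v|
          + (|s' x * (f₂ u - f₂ v)| + |(s' x - s' y) * f₂ v|) + |q u - q v| := by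
      calc _ ≤ |s x * (f₁ u - f₁ v) + (s x - s y) * f₁ v
            + (s' x * (f₂ u - f₂ v) + (s' x - s' y) * f₂ v)| + |q u - q v| := abs_add_le _ _
        _ ≤ |s x * (f₁ u - f₁ v) + (s x - s y) * f₁ v|
            + |s' x * (f₂ u - f₂ v) + (s' x - s' y) * f₂ v| + |q u - q v| := by
              gcongr; exact abs_add_le _ _
        _ ≤ _ := by gcongr <;> exact abs_add_le _ _
    have hsplit : (Ls * B₁ + Ls' * B₂ + n * Lq) / n = Ls * B₁ / n + Ls' * B₂ / n + Lq := by
      field_simp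
    calc _ ≤ _ := tri
      _ ≤ ω * oscOn f₁ (Set.Icc 0 1) + Ls * B₁ / n
          + (ω * oscOn f₂ (Set.Icc 0 1) + Ls' * B₂ / n) + Lq := by
            gcongr
      _ = ω * (oscOn f₁ (Set.Icc 0 1) + oscOn f₂ (Set.Icc 0 1))
          + (Ls * B₁ / n + Ls' * B₂ / n + Lq) := by ring
      _ = _ := by rw [hsplit]
  -- conclude
  apply csSup_le
  · exact ⟨0, a, haI, a, haI, by simp⟩
  · rintro r ⟨x₁, h₁, x₂, h₂, rfl⟩
    exact key x₂ h₂ x₁ h₁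
end

section
/- Let ω, ω̃ ≥ 0 with ω + ω̃ < 1 and suppose nonnegative reals a, b satisfy a ≤ ω·(a + b) + (1 + ω)·ε and b ≤ ω̃·(a + b) + (1 + ω̃)·ε for some ε ≥ 0. Then a ≤ ((1 + 2ω − ω̃)/(1 − ω − ω̃))·ε. -/
theorem stmt_16 (ω ω' a b ε : ℝ) (hω : 0 ≤ ω) (hω' : 0 ≤ ω')
    (hsum : ω + ω' < 1) (ha : 0 ≤ a) (hb : 0 ≤ b) (hε : 0 ≤ ε)
    (h1 : a ≤ ω * (a + b) + (1 + ω) * ε) (h2 : b ≤ ω' * (a + b) + (1 + ω') * ε) :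
    a ≤ (1 + 2 * ω - ω') / (1 - ω - ω') * ε := by
  have hD : 0 < 1 - ω - ω' := by linarith
  rw [div_mul_eq_mul_div, le_div_iff₀ hD]
  nlinarith [mul_nonneg hω hε, mul_nonneg hω' hε, mul_nonneg hω (add_nonneg ha hb)]
end
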